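/- Let Ω = {(t,x,v) ∈ ℝ³ : v + t + eˣ ≠ 0}. Define on Ω: ξ(t,x,v) = −2/(v + t + eˣ) and θ(t,x,v) = 1 − 2eˣ/(v + t + eˣ) (so that θ = φ_t + φ_x ξ with φ = t + eˣ). Then the pair (ξ, θ) satisfies the determining system for reduction operators of the potential fast diffusion equation on Ω. (This verifies Case 3 with φ = t + eˣ of the classification theorem of non-Lie reduction operators.) -/

import Mathlib

/-- Partial derivative with respect to the first variable `t`. -/
noncomputable def pt3 (f : ℝ × ℝ × ℝ → ℝ) (p : ℝ × ℝ × ℝ) : ℝ :=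
  deriv (fun t => f (t, p.2.1, p.2.2)) p.1

/-- Partial derivative with respect to the second variable `x`. -/
noncomputable def px3 (f : ℝ × ℝ × ℝ → ℝ) (p : ℝ × ℝ × ℝ) : ℝ :=
  deriv (fun x => f (p.1, x, p.2.2)) p.2.1

/-- Partial derivative with respect to the third variable `v`. -/
noncomputable def pv3 (f : ℝ × ℝ × ℝ → ℝ) (p : ℝ × ℝ × ℝ) : ℝ :=
  deriv (fun v => f (p.1, p.2.1, v)) p.2.2

/-- The determining system for reduction operators `Q = ∂_t + ξ∂_x + θ∂_v`
of the potential fast diffusion equation `v_t = v_xx / v_x`: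
(i) `ξ_vv = ξ ξ_v`; (ii) `ξ_t = 2ξ_xv − θ_vv − θ_v ξ + θ ξ_v − ξ ξ_x`;
(iii) `θ_xx = θ θ_x`; (iv) `θ_t = 2θ_xv − ξ_xx − ξ_x θ + ξ θ_x − θ θ_v`. -/
def DeterminingSystem (ξ θ : ℝ × ℝ × ℝ → ℝ) (Ω : Set (ℝ × ℝ × ℝ)) : Prop :=
  ∀ p ∈ Ω,
    pv3 (pv3 ξ) p = ξ p * pv3 ξ p ∧
    pt3 ξ p =
      2 * pv3 (px3 ξ) p - pv3 (pv3 θ) p - pv3 θ p * ξ p + θ p * pv3 ξ p - ξ p * px3 ξ p ∧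
    px3 (px3 θ) p = θ p * px3 θ p ∧
    pt3 θ p =
      2 * pv3 (px3 θ) p - px3 (px3 ξ) p - px3 ξ p * θ p + ξ p * px3 θ p - θ p * pv3 θ p

noncomputable def Xi : ℝ × ℝ × ℝ → ℝ := fun p => -2 / (p.2.2 + p.1 + Real.exp p.2.1)
noncomputable def Th : ℝ × ℝ × ℝ → ℝ := fun p => 1 - 2 * Real.exp p.2.1 / (p.2.2 + p.1 + Real.exp p.2.1)

lemma hdiv (k : ℝ) {f : ℝ → ℝ} {f' a : ℝ} (hf : HasDerivAt f f' a) (h : f a ≠ 0) :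
    HasDerivAt (fun y => k / f y) (-(k * f') / f a ^ 2) a := by
  have h3 : -(k * f') / f a ^ 2 = (0 * f a - k * f') / f a ^ 2 := by ring
  rw [h3]; exact (hasDerivAt_const a k).div hf h

lemma hdivsq (k : ℝ) {f : ℝ → ℝ} {f' a : ℝ} (hf : HasDerivAt f f' a) (h : f a ≠ 0) :
    HasDerivAt (fun y => k / f y ^ 2) (-(2 * k * f') / f a ^ 3) a := by
  have hg : HasDerivAt (fun y => f y ^ 2) (2 * f a * f') a := by
    simpa using hf.fun_pow 2
  have h3 : -(2 * k * f') / f a ^ 3 = (0 * f a ^ 2 - k * (2 * f a * f')) / (f a ^ 2) ^ 2 := by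
    field_simp; ring
  rw [h3]; exact (hasDerivAt_const a k).div hg (pow_ne_zero 2 h)

section first
variable (t x v : ℝ)

lemma hdv : HasDerivAt (fun v' : ℝ => v' + t + Real.exp x) 1 v :=
  ((hasDerivAt_id v).add_const t).add_const (Real.exp x)

lemma hdt : HasDerivAt (fun t' : ℝ => v + t' + Real.exp x) 1 t :=
  ((hasDerivAt_id t).const_add v).add_const (Real.exp x)

lemma hdx : HasDerivAt (fun x' : ℝ => v + t + Real.exp x') (Real.exp x) x :=
  (Real.hasDerivAt_exp x).const_add (v + t)

variable (h : v + t + Real.exp x ≠ 0)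
include h

lemma pv_Xi : pv3 Xi (t, x, v) = 2 / (v + t + Real.exp x) ^ 2 := by
  have h1 : pv3 Xi (t, x, v) = -((-2) * 1) / (v + t + Real.exp x) ^ 2 :=
    (hdiv (-2) (hdv t x v) h).deriv
  rw [h1]; ring

lemma pt_Xi : pt3 Xi (t, x, v) = 2 / (v + t + Real.exp x) ^ 2 := by
  have h1 : pt3 Xi (t, x, v) = -((-2) * 1) / (v + t + Real.exp x) ^ 2 :=
    (hdiv (-2) (hdt t x v) h).deriv
  rw [h1]; ring

lemma px_Xi : px3 Xi (t, x, v) = 2 * Real.exp x / (v + t + Real.exp x) ^ 2 := by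
  have h1 : px3 Xi (t, x, v) = -((-2) * Real.exp x) / (v + t + Real.exp x) ^ 2 :=
    (hdiv (-2) (hdx t x v) h).deriv
  rw [h1]; ring

lemma pv_Th : pv3 Th (t, x, v) = 2 * Real.exp x / (v + t + Real.exp x) ^ 2 := by
  have h1 : HasDerivAt (fun v' => Th (t, x, v'))
      (0 - -(2 * Real.exp x * 1) / (v + t + Real.exp x) ^ 2) v :=
    (hasDerivAt_const v 1).sub (hdiv (2 * Real.exp x) (hdv t x v) h)
  have h2 := h1.deriv
  rw [show pv3 Th (t, x, v) = deriv (fun v' => Th (t, x, v')) v from rfl, h2]; ring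

lemma pt_Th : pt3 Th (t, x, v) = 2 * Real.exp x / (v + t + Real.exp x) ^ 2 := by
  have h1 : HasDerivAt (fun t' => Th (t', x, v))
      (0 - -(2 * Real.exp x * 1) / (v + t + Real.exp x) ^ 2) t :=
    (hasDerivAt_const t 1).sub (hdiv (2 * Real.exp x) (hdt t x v) h)
  have h2 := h1.deriv
  rw [show pt3 Th (t, x, v) = deriv (fun t' => Th (t', x, v)) t from rfl, h2]; ring

lemma px_Th : px3 Th (t, x, v) = -2 * Real.exp x * (v + t) / (v + t + Real.exp x) ^ 2 := by
  have hf : HasDerivAt (fun x' : ℝ => 2 * Real.exp x') (2 * Real.exp x) x :=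
    (Real.hasDerivAt_exp x).const_mul 2
  have h1 : HasDerivAt (fun x' => Th (t, x', v))
      (0 - (2 * Real.exp x * (v + t + Real.exp x) - 2 * Real.exp x * Real.exp x) /
        (v + t + Real.exp x) ^ 2) x :=
    (hasDerivAt_const x 1).sub (hf.div (hdx t x v) h)
  have h2 := h1.deriv
  rw [show px3 Th (t, x, v) = deriv (fun x' => Th (t, x', v)) x from rfl, h2]
  field_simp; ring

end first

section second
variable (t x v : ℝ) (h : v + t + Real.exp x ≠ 0)
include h

lemma hevv : ∀ᶠ v' in nhds v, v' + t + Real.exp x ≠ 0 :=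
  (hdv t x v).continuousAt.eventually_ne h

lemma hevx : ∀ᶠ x' in nhds x, v + t + Real.exp x' ≠ 0 :=
  (hdx t x v).continuousAt.eventually_ne h

lemma pvpv_Xi : pv3 (pv3 Xi) (t, x, v) = -4 / (v + t + Real.exp x) ^ 3 := by
  have heq : (fun v' => pv3 Xi (t, x, v')) =ᶠ[nhds v]
      (fun v' => 2 / (v' + t + Real.exp x) ^ 2) :=
    (hevv t x v h).mono fun v' hv' => pv_Xi t x v' hv'
  have h2 : deriv (fun v' => 2 / (v' + t + Real.exp x) ^ 2) v
      = -(2 * 2 * 1) / (v + t + Real.exp x) ^ 3 := (hdivsq 2 (hdv t x v) h).deriv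
  rw [show pv3 (pv3 Xi) (t, x, v) = deriv (fun v' => pv3 Xi (t, x, v')) v from rfl,
    heq.deriv_eq, h2]; ring

lemma pvpx_Xi : pv3 (px3 Xi) (t, x, v) = -4 * Real.exp x / (v + t + Real.exp x) ^ 3 := by
  have heq : (fun v' => px3 Xi (t, x, v')) =ᶠ[nhds v]
      (fun v' => 2 * Real.exp x / (v' + t + Real.exp x) ^ 2) :=
    (hevv t x v h).mono fun v' hv' => px_Xi t x v' hv'
  have h2 : deriv (fun v' => 2 * Real.exp x / (v' + t + Real.exp x) ^ 2) v
      = -(2 * (2 * Real.exp x) * 1) / (v + t + Real.exp x) ^ 3 :=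
    (hdivsq (2 * Real.exp x) (hdv t x v) h).deriv
  rw [show pv3 (px3 Xi) (t, x, v) = deriv (fun v' => px3 Xi (t, x, v')) v from rfl,
    heq.deriv_eq, h2]; ring

lemma pvpv_Th : pv3 (pv3 Th) (t, x, v) = -4 * Real.exp x / (v + t + Real.exp x) ^ 3 := by
  have heq : (fun v' => pv3 Th (t, x, v')) =ᶠ[nhds v]
      (fun v' => 2 * Real.exp x / (v' + t + Real.exp x) ^ 2) :=
    (hevv t x v h).mono fun v' hv' => pv_Th t x v' hv'
  have h2 : deriv (fun v' => 2 * Real.exp x / (v' + t + Real.exp x) ^ 2) v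
      = -(2 * (2 * Real.exp x) * 1) / (v + t + Real.exp x) ^ 3 :=
    (hdivsq (2 * Real.exp x) (hdv t x v) h).deriv
  rw [show pv3 (pv3 Th) (t, x, v) = deriv (fun v' => pv3 Th (t, x, v')) v from rfl,
    heq.deriv_eq, h2]; ring

lemma pvpx_Th : pv3 (px3 Th) (t, x, v)
    = 2 * Real.exp x * (v + t - Real.exp x) / (v + t + Real.exp x) ^ 3 := by
  have heq : (fun v' => px3 Th (t, x, v')) =ᶠ[nhds v]
      (fun v' => -2 * Real.exp x * (v' + t) / (v' + t + Real.exp x) ^ 2) :=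
    (hevv t x v h).mono fun v' hv' => px_Th t x v' hv'
  have hf : HasDerivAt (fun v' : ℝ => -2 * Real.exp x * (v' + t)) (-2 * Real.exp x * 1) v :=
    ((hasDerivAt_id v).add_const t).const_mul (-2 * Real.exp x)
  have hg : HasDerivAt (fun v' : ℝ => (v' + t + Real.exp x) ^ 2)
      (2 * (v + t + Real.exp x) * 1) v := by
    simpa using (hdv t x v).fun_pow 2
  have h2 := (hf.fun_div hg (pow_ne_zero 2 h)).deriv
  rw [show pv3 (px3 Th) (t, x, v) = deriv (fun v' => px3 Th (t, x, v')) v from rfl,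
    heq.deriv_eq, h2]
  field_simp; ring

lemma pxpx_Xi : px3 (px3 Xi) (t, x, v)
    = 2 * Real.exp x * (v + t - Real.exp x) / (v + t + Real.exp x) ^ 3 := by
  have heq : (fun x' => px3 Xi (t, x', v)) =ᶠ[nhds x]
      (fun x' => 2 * Real.exp x' / (v + t + Real.exp x') ^ 2) :=
    (hevx t x v h).mono fun x' hx' => px_Xi t x' v hx'
  have hf : HasDerivAt (fun x' : ℝ => 2 * Real.exp x') (2 * Real.exp x) x :=
    (Real.hasDerivAt_exp x).const_mul 2
  have hg : HasDerivAt (fun x' : ℝ => (v + t + Real.exp x') ^ 2)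
      (2 * (v + t + Real.exp x) * Real.exp x) x := by
    simpa using (hdx t x v).fun_pow 2
  have h2 := (hf.fun_div hg (pow_ne_zero 2 h)).deriv
  rw [show px3 (px3 Xi) (t, x, v) = deriv (fun x' => px3 Xi (t, x', v)) x from rfl,
    heq.deriv_eq, h2]
  field_simp; ring

lemma pxpx_Th : px3 (px3 Th) (t, x, v)
    = -2 * Real.exp x * (v + t) * (v + t - Real.exp x) / (v + t + Real.exp x) ^ 3 := by
  have heq : (fun x' => px3 Th (t, x', v)) =ᶠ[nhds x]
      (fun x' => -2 * Real.exp x' * (v + t) / (v + t + Real.exp x') ^ 2) :=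
    (hevx t x v h).mono fun x' hx' => px_Th t x' v hx'
  have hf : HasDerivAt (fun x' : ℝ => -2 * Real.exp x' * (v + t))
      (-2 * Real.exp x * (v + t)) x :=
    ((Real.hasDerivAt_exp x).const_mul (-2)).mul_const (v + t)
  have hg : HasDerivAt (fun x' : ℝ => (v + t + Real.exp x') ^ 2)
      (2 * (v + t + Real.exp x) * Real.exp x) x := by
    simpa using (hdx t x v).fun_pow 2
  have h2 := (hf.fun_div hg (pow_ne_zero 2 h)).deriv
  rw [show px3 (px3 Th) (t, x, v) = deriv (fun x' => px3 Th (t, x', v)) x from rfl,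
    heq.deriv_eq, h2]
  field_simp; ring

end second

/-- Case 3 with `φ = t + eˣ` of the classification of non-Lie reduction operators of the
potential fast diffusion equation: `ξ = −2/(v + φ)`, `θ = φ_t + φ_x ξ`. -/
theorem reduction_operator_case3_exp :
    DeterminingSystem
      (fun p => -2 / (p.2.2 + p.1 + Real.exp p.2.1))
      (fun p => 1 - 2 * Real.exp p.2.1 / (p.2.2 + p.1 + Real.exp p.2.1))
      {p : ℝ × ℝ × ℝ | p.2.2 + p.1 + Real.exp p.2.1 ≠ 0} := by
  show DeterminingSystem Xi Th _
  intro p hp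
  obtain ⟨t, x, v⟩ := p
  replace hp : v + t + Real.exp x ≠ 0 := hp
  have hXi : Xi (t, x, v) = -2 / (v + t + Real.exp x) := rfl
  have hTh : Th (t, x, v) = 1 - 2 * Real.exp x / (v + t + Real.exp x) := rfl
  refine ⟨?_, ?_, ?_, ?_⟩
  · rw [pvpv_Xi t x v hp, pv_Xi t x v hp, hXi]
    field_simp; ring
  · rw [pt_Xi t x v hp, pvpx_Xi t x v hp, pvpv_Th t x v hp, pv_Th t x v hp,
      pv_Xi t x v hp, px_Xi t x v hp, hXi, hTh]
    field_simp; ring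
  · rw [pxpx_Th t x v hp, px_Th t x v hp, hTh]
    field_simp; ring
  · rw [pt_Th t x v hp, pvpx_Th t x v hp, pxpx_Xi t x v hp, px_Xi t x v hp,
      px_Th t x v hp, pv_Th t x v hp, hXi, hTh]
    field_simp; ring
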